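/- Let k, r ≥ 2, Q = (r-1)(k-1), σ = k-2, and let f : ℕ → ℂ be finitely supported. Define the Abel transform A f : ℤ → ℂ by A f(h) = Q^(|h|/2) f(|h|) + σ ∑_{j≥1} Q^(|h|/2 + j - 1) f(|h| + 2j - 1) + ((r-2)/(r-1)) ∑_{j≥1} Q^(|h|/2 + j) f(|h| + 2j). Then A f satisfies, for all n ∈ ℕ: Q^(-n/2) [ A f(n) - A f(n+2) + Q^(-1/2)(A f(n+1) - A f(n+3)) ] = f(n) - f(n+2) + (k-1)(f(n+1) - f(n+3)). -/

import Mathlib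

theorem stmt1 (k r : ℕ) (hk : 2 ≤ k) (hr : 2 ≤ r)
    (Q : ℝ) (hQ : Q = ((r : ℝ) - 1) * ((k : ℝ) - 1))
    (f : ℕ → ℂ) (hf : (Function.support f).Finite)
    (A : ℤ → ℂ)
    (hA : ∀ h : ℤ, A h =
      ((Q ^ ((h.natAbs : ℝ) / 2) : ℝ) : ℂ) * f h.natAbs
      + ((k : ℂ) - 2) *
          ∑' j : ℕ, ((Q ^ ((h.natAbs : ℝ) / 2 + (j : ℝ)) : ℝ) : ℂ) * f (h.natAbs + 2 * j + 1)
      + (((r : ℂ) - 2) / ((r : ℂ) - 1)) *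
          ∑' j : ℕ, ((Q ^ ((h.natAbs : ℝ) / 2 + (j : ℝ) + 1) : ℝ) : ℂ) * f (h.natAbs + 2 * j + 2)) :
    ∀ n : ℕ,
      ((Q ^ (-(n : ℝ) / 2) : ℝ) : ℂ) *
        (A n - A ((n : ℤ) + 2) + ((Q ^ (-(1 : ℝ) / 2) : ℝ) : ℂ) * (A ((n : ℤ) + 1) - A ((n : ℤ) + 3)))
      = f n - f (n + 2) + ((k : ℂ) - 1) * (f (n + 1) - f (n + 3)) := by
  intro n
  have hk2 : (2:ℝ) ≤ (k:ℝ) := by exact_mod_cast hk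
  have hr2 : (2:ℝ) ≤ (r:ℝ) := by exact_mod_cast hr
  have hQpos : 0 < Q := by rw [hQ]; nlinarith
  have hrne : ((r:ℂ) - 1) ≠ 0 := by
    intro h
    have : (r:ℂ) = 1 := by linear_combination h
    have : r = 1 := by exact_mod_cast this
    omega
  have hQC : ((Q:ℝ):ℂ) = ((r:ℂ)-1) * ((k:ℂ)-1) := by rw [hQ]; push_cast; ring
  -- f vanishes from some point on
  obtain ⟨N, hN⟩ : ∃ N, ∀ m, N ≤ m → f m = 0 := by
    refine ⟨(hf.toFinset.sup id) + 1, fun m hm => ?_⟩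
    by_contra h
    have hmem : m ∈ hf.toFinset := by
      rw [Set.Finite.mem_toFinset]; exact h
    have := Finset.le_sup (f := id) hmem
    simp only [id] at this
    omega
  have key : ∀ (g : ℕ → ℂ) (φ : ℕ → ℕ), (∀ j, j ≤ φ j) →
      Summable (fun j => g j * f (φ j)) := by
    intro g φ hφ
    apply summable_of_ne_finset_zero (s := Finset.range N)
    intro j hj
    rw [Finset.mem_range, not_lt] at hj
    rw [hN (φ j) (le_trans hj (hφ j)), mul_zero]
  have hAnat : ∀ m : ℕ, A (m:ℤ) =
      ((Q ^ ((m:ℝ)/2) :ℝ):ℂ) * f m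
      + ((k:ℂ)-2) * ∑' j : ℕ, ((Q ^ ((m:ℝ)/2 + (j:ℝ)) :ℝ):ℂ) * f (m + 2*j + 1)
      + (((r:ℂ)-2)/((r:ℂ)-1)) * ∑' j : ℕ, ((Q ^ ((m:ℝ)/2 + (j:ℝ) + 1):ℝ):ℂ) * f (m + 2*j + 2) := by
    intro m
    simpa using hA (m:ℤ)
  -- telescoping for the first kind of sum
  have h1 : ∀ m : ℕ,
      (∑' j : ℕ, ((Q ^ ((m:ℝ)/2 + (j:ℝ)) :ℝ):ℂ) * f (m + 2*j + 1))
      - (∑' j : ℕ, ((Q ^ (((m+2:ℕ):ℝ)/2 + (j:ℝ)) :ℝ):ℂ) * f (m + 2 + 2*j + 1))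
      = ((Q ^ ((m:ℝ)/2) :ℝ):ℂ) * f (m + 1) := by
    intro m
    set g : ℕ → ℂ := fun j => ((Q ^ ((m:ℝ)/2 + (j:ℝ)) :ℝ):ℂ) * f (m + 2*j + 1) with hgdef
    have hg : Summable g := key _ _ (fun j => by omega)
    have e' : (∑' j : ℕ, ((Q ^ (((m+2:ℕ):ℝ)/2 + (j:ℝ)) :ℝ):ℂ) * f (m + 2 + 2*j + 1))
        = ∑' j : ℕ, g (j + 1) := by
      apply tsum_congr
      intro j
      have e1 : ((m+2:ℕ):ℝ)/2 + (j:ℝ) = (m:ℝ)/2 + ((j+1:ℕ):ℝ) := by push_cast; ring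
      have e2 : m + 2 + 2*j + 1 = m + 2*(j+1) + 1 := by ring
      rw [e1, e2]
    rw [e', Summable.tsum_eq_zero_add hg]
    have hg0 : g 0 = ((Q ^ ((m:ℝ)/2) :ℝ):ℂ) * f (m + 1) := by
      simp [hgdef]
    rw [← hg0]; ring
  -- telescoping for the second kind of sum
  have h2 : ∀ m : ℕ,
      (∑' j : ℕ, ((Q ^ ((m:ℝ)/2 + (j:ℝ) + 1) :ℝ):ℂ) * f (m + 2*j + 2))
      - (∑' j : ℕ, ((Q ^ (((m+2:ℕ):ℝ)/2 + (j:ℝ) + 1) :ℝ):ℂ) * f (m + 2 + 2*j + 2))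
      = ((Q ^ ((m:ℝ)/2 + 1) :ℝ):ℂ) * f (m + 2) := by
    intro m
    set g : ℕ → ℂ := fun j => ((Q ^ ((m:ℝ)/2 + (j:ℝ) + 1) :ℝ):ℂ) * f (m + 2*j + 2) with hgdef
    have hg : Summable g := key _ _ (fun j => by omega)
    have e' : (∑' j : ℕ, ((Q ^ (((m+2:ℕ):ℝ)/2 + (j:ℝ) + 1) :ℝ):ℂ) * f (m + 2 + 2*j + 2))
        = ∑' j : ℕ, g (j + 1) := by
      apply tsum_congr
      intro j
      have e1 : ((m+2:ℕ):ℝ)/2 + (j:ℝ) + 1 = (m:ℝ)/2 + ((j+1:ℕ):ℝ) + 1 := by push_cast; ring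
      have e2 : m + 2 + 2*j + 2 = m + 2*(j+1) + 2 := by ring
      rw [e1, e2]
    rw [e', Summable.tsum_eq_zero_add hg]
    have hg0 : g 0 = ((Q ^ ((m:ℝ)/2 + 1) :ℝ):ℂ) * f (m + 2) := by
      simp [hgdef]
    rw [← hg0]; ring
  -- power shift lemmas
  have eshift : ∀ m : ℕ, ((Q ^ (((m+2:ℕ):ℝ)/2) :ℝ):ℂ)
      = ((Q ^ ((m:ℝ)/2) :ℝ):ℂ) * (((r:ℂ)-1)*((k:ℂ)-1)) := by
    intro m
    have e1 : ((m+2:ℕ):ℝ)/2 = (m:ℝ)/2 + 1 := by push_cast; ring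
    rw [e1, Real.rpow_add hQpos, Real.rpow_one, Complex.ofReal_mul, hQC]
  have eshift' : ∀ m : ℕ, ((Q ^ ((m:ℝ)/2 + 1) :ℝ):ℂ)
      = ((Q ^ ((m:ℝ)/2) :ℝ):ℂ) * (((r:ℂ)-1)*((k:ℂ)-1)) := by
    intro m
    rw [Real.rpow_add hQpos, Real.rpow_one, Complex.ofReal_mul, hQC]
  have hτ : (((r:ℂ)-2)/((r:ℂ)-1)) * (((r:ℂ)-1)*((k:ℂ)-1)) = ((r:ℂ)-2) * ((k:ℂ)-1) := by
    field_simp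
  -- the key difference formula
  have hD : ∀ m : ℕ, A (m:ℤ) - A ((m+2:ℕ):ℤ)
      = ((Q ^ ((m:ℝ)/2) :ℝ):ℂ) *
        (f m + ((k:ℂ)-2) * f (m+1) - ((k:ℂ)-1) * f (m+2)) := by
    intro m
    rw [hAnat m, hAnat (m+2)]
    have h2' := h2 m
    rw [eshift' m] at h2'
    rw [eshift m]
    linear_combination ((k:ℂ)-2) * h1 m + (((r:ℂ)-2)/((r:ℂ)-1)) * h2'
      + (((Q ^ ((m:ℝ)/2) :ℝ):ℂ) * f (m+2)) * hτ
  -- rewrite the integer arguments as natural ones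
  have c1 : ((n:ℤ)+1) = (((n+1:ℕ)):ℤ) := by push_cast; ring
  have c2 : ((n:ℤ)+2) = (((n+2:ℕ)):ℤ) := by push_cast; ring
  have c3 : ((n:ℤ)+3) = (((n+1+2:ℕ)):ℤ) := by push_cast; ring
  rw [c1, c2, c3]
  have hD0 := hD n
  have hD1 := hD (n+1)
  have e1 : ((Q ^ (((n+1:ℕ):ℝ)/2) :ℝ):ℂ)
      = ((Q ^ ((n:ℝ)/2) :ℝ):ℂ) * ((Q ^ ((1:ℝ)/2) :ℝ):ℂ) := by
    have : ((n+1:ℕ):ℝ)/2 = (n:ℝ)/2 + (1:ℝ)/2 := by push_cast; ring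
    rw [this, Real.rpow_add hQpos, Complex.ofReal_mul]
  rw [e1] at hD1
  have hnn : n+1+1 = n+2 := by omega
  have hnn' : n+1+2 = n+3 := by omega
  rw [hnn, hnn'] at hD1
  have eA : ((Q ^ (-(n:ℝ)/2) :ℝ):ℂ) = (((Q ^ ((n:ℝ)/2) :ℝ):ℂ))⁻¹ := by
    rw [show -(n:ℝ)/2 = -((n:ℝ)/2) by ring, Real.rpow_neg hQpos.le, Complex.ofReal_inv]
  have eB : ((Q ^ (-(1:ℝ)/2) :ℝ):ℂ) = (((Q ^ ((1:ℝ)/2) :ℝ):ℂ))⁻¹ := by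
    rw [show -(1:ℝ)/2 = -((1:ℝ)/2) by ring, Real.rpow_neg hQpos.le, Complex.ofReal_inv]
  have hXne : ((Q ^ ((n:ℝ)/2) :ℝ):ℂ) ≠ 0 := by
    exact_mod_cast (Real.rpow_pos_of_pos hQpos _).ne'
  have hYne : ((Q ^ ((1:ℝ)/2) :ℝ):ℂ) ≠ 0 := by
    exact_mod_cast (Real.rpow_pos_of_pos hQpos _).ne'
  rw [eA, eB, hD0, hD1]
  field_simp
  ring
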